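/- arXiv:1007.1932 — 2 statements merged into one kernel-verified Lean document; each statement's English description precedes it below -/
import Mathlib

section
/- Boolean cumulants are additive for boolean independent variables: if X and Y are boolean independent selfadjoint elements with respect to a unital B-bimodule map φ, then B_{n,X+Y} = B_{n,X} + B_{n,Y} for all n ≥ 1, where B_{n,X} : Bⁿ → D are the operator-valued boolean cumulants. -/
/-- the word `z b₁ z b₂ ⋯ z bₙ` in the algebra `A`, for `l = [b₁, …, bₙ]`. -/
def wrd {B A : Type*} [CStarAlgebra B] [Ring A] [Algebra ℂ A] [StarRing A]
    (ι : B →⋆ₐ[ℂ] A) (z : A) (l : List B) : A :=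
  (l.map fun b => z * ι b).prod

/-- the non-unital polynomial algebra `B⟨z⟩₀` inside `A`: the linear span of the
monomials `b₀ z b₁ z ⋯ z bₙ`, `n ≥ 1`. -/
def polyNoConst {B A : Type*} [CStarAlgebra B] [Ring A] [Algebra ℂ A] [StarRing A]
    (ι : B →⋆ₐ[ℂ] A) (z : A) : Submodule ℂ A :=
  Submodule.span ℂ {a : A | ∃ (b : B) (t : List B), t ≠ [] ∧ a = ι b * wrd ι z t}

/-- Auxiliary recursion: `Hfun mt mf ε l` is the sum, over all assignments of letters
`x`/`y` to the positions of `l` whose first letter is `ε`, of the product over maximal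
blocks of the block moments (`mt` for `x`-blocks, `mf` for `y`-blocks). -/
def Hfun {B D : Type*} [Ring D] (mt mf : List B → D) : Bool → List B → D
  | _, [] => 1
  | ε, b :: t =>
    ∑ k ∈ Finset.range (t.length + 1),
      (if ε then mt else mf) ((b :: t).take (k + 1)) * Hfun mt mf (!ε) (t.drop k)
  termination_by _ l => l.length
  decreasing_by simp only [List.length_cons, List.length_drop]; omega

theorem Hfun_nil {B D : Type*} [Ring D] (mt mf : List B → D) (ε : Bool) :
    Hfun mt mf ε [] = 1 := by
  rw [Hfun]

theorem Hfun_ne_nil {B D : Type*} [Ring D] (mt mf : List B → D) (ε : Bool)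
    (l : List B) (h : l ≠ []) :
    Hfun mt mf ε l = ∑ k ∈ Finset.range l.length,
      (if ε then mt else mf) (l.take (k + 1)) * Hfun mt mf (!ε) (l.drop (k + 1)) := by
  cases l with
  | nil => exact absurd rfl h
  | cons b t => rw [Hfun]; rfl

/-- The factorization predicate: `g` is a committed product of alternating blocks with
total `φ`-value `c`, which factorizes in front of any further alternating product of
blocks starting with letter `ε`. -/
def PP {B A D : Type*} [CStarAlgebra B] [Ring A] [Algebra ℂ A] [StarRing A]
    [Ring D] [Algebra ℂ D]
    (ι : B →⋆ₐ[ℂ] A) (x y : A) (φ : A →ₗ[ℂ] D) (ε : Bool) (g : A) (c : D) : Prop :=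
  ∀ ops : List (A × Bool),
    (ops.map Prod.snd).Chain' (· ≠ ·) →
    (∀ p ∈ ops, p.1 ∈ polyNoConst ι (if p.2 then x else y)) →
    (ops = [] ∨ ops.head?.map Prod.snd = some ε) →
    φ (g * (ops.map Prod.fst).prod) = c * (ops.map fun p => φ p.1).prod

/-- **additivity of operator-valued boolean cumulants.**
`B ⊆ D`, `B ⊆ A` unital inclusions of `*`-algebras, `φ : A → D` a unital
`B`-bimodule map, and `x, y ∈ A` selfadjoint, boolean independent with respect to
`φ` (alternating products out of `B⟨x⟩₀`, `B⟨y⟩₀` factorize under `φ`).  If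
`cx`, `cy`, `cs` are the boolean cumulant functionals of `x`, `y` and `x + y`
(defined through the recursion
`φ(z b₁ ⋯ z bₙ) = ∑_{k=1}^{n} B_k(b₁,…,b_k) φ(z b_{k+1} ⋯ z bₙ)`), then
`B_{n, x+y} = B_{n,x} + B_{n,y}` for all `n ≥ 1`. -/
theorem boolean_cumulants_additive
    {B A D : Type*} [CStarAlgebra B]
    [Ring A] [StarRing A] [Algebra ℂ A] [StarModule ℂ A]
    [CStarAlgebra D] (ι : B →⋆ₐ[ℂ] A) (ιD : B →⋆ₐ[ℂ] D)
    (φ : A →ₗ[ℂ] D) (hunital : φ 1 = 1)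
    (hbimod : ∀ (b b' : B) (a : A), φ (ι b * a * ι b') = ιD b * φ a * ιD b')
    (x y : A) (hx : star x = x) (hy : star y = y)
    (hind : ∀ ops : List (A × Bool),
      (ops.map Prod.snd).Chain' (· ≠ ·) →
      (∀ p ∈ ops, p.1 ∈ polyNoConst ι (if p.2 then x else y)) →
      φ ((ops.map Prod.fst).prod) = ((ops.map fun p => φ p.1).prod))
    (cx cy cs : List B → D)
    (hcx : ∀ l : List B, l ≠ [] → φ (wrd ι x l) =
      ∑ k ∈ Finset.range l.length, cx (l.take (k + 1)) * φ (wrd ι x (l.drop (k + 1))))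
    (hcy : ∀ l : List B, l ≠ [] → φ (wrd ι y l) =
      ∑ k ∈ Finset.range l.length, cy (l.take (k + 1)) * φ (wrd ι y (l.drop (k + 1))))
    (hcs : ∀ l : List B, l ≠ [] → φ (wrd ι (x + y) l) =
      ∑ k ∈ Finset.range l.length, cs (l.take (k + 1)) * φ (wrd ι (x + y) (l.drop (k + 1)))) :
    ∀ l : List B, l ≠ [] → cs l = cx l + cy l := by
  classical
  -- abbreviations
  set mt : List B → D := fun u => φ (wrd ι x u) with hmt
  set mf : List B → D := fun u => φ (wrd ι y u) with hmf
  -- basic word lemmas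
  have wrd_nil : ∀ w : A, wrd ι w [] = 1 := fun _ => rfl
  have wrd_append : ∀ (w : A) (s u : List B),
      wrd ι w (s ++ u) = wrd ι w s * wrd ι w u := by
    intro w s u; simp [wrd]
  have wrd_cons : ∀ (w : A) (b : B) (t : List B),
      wrd ι w (b :: t) = w * ι b * wrd ι w t := by
    intro w b t; simp [wrd, mul_assoc]
  have m_eq : ∀ (ε : Bool) (u : List B),
      (if ε then mt else mf) u = φ (wrd ι (if ε then x else y) u) := by
    intro ε u; cases ε <;> rfl
  have m_nil : ∀ ε : Bool, (if ε then mt else mf) [] = 1 := by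
    intro ε; cases ε <;> simpa [mt, mf, wrd] using hunital
  have mem_poly : ∀ (ε : Bool) (s : List B), s ≠ [] →
      wrd ι (if ε then x else y) s ∈ polyNoConst ι (if ε then x else y) := by
    intro ε s hs
    apply Submodule.subset_span
    exact ⟨1, s, hs, by rw [map_one, one_mul]⟩
  -- the trivial committed prefix
  have P_one : ∀ ε : Bool, PP ι x y φ ε 1 1 := by
    intro ε ops hchain hmem _
    rw [one_mul, one_mul]
    exact hind ops hchain hmem
  -- evaluation of PP on a single new block
  have P_eval : ∀ (ε : Bool) (g : A) (c : D), PP ι x y φ ε g c →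
      ∀ s : List B, s ≠ [] →
      φ (g * wrd ι (if ε then x else y) s) = c * φ (wrd ι (if ε then x else y) s) := by
    intro ε g c hP s hs
    have h := hP [(wrd ι (if ε then x else y) s, ε)] (List.isChain_singleton ε)
      (by
        intro p hp
        simp only [List.mem_singleton] at hp
        subst hp
        exact mem_poly ε s hs)
      (Or.inr rfl)
    simpa using h
  -- extending the committed prefix by one block
  have P_extend : ∀ (ε : Bool) (g : A) (c : D), PP ι x y φ ε g c →
      ∀ s : List B, s ≠ [] →
      PP ι x y φ (!ε) (g * wrd ι (if ε then x else y) s)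
        (c * φ (wrd ι (if ε then x else y) s)) := by
    intro ε g c hP s hs ops hchain hmem hhead
    have hch : (((wrd ι (if ε then x else y) s, ε) :: ops).map Prod.snd).Chain' (· ≠ ·) := by
      simp only [List.map_cons]
      rw [List.Chain', List.isChain_cons]
      constructor
      · intro a ha
        rcases hhead with h0 | h0
        · subst h0; simp at ha
        · rw [List.head?_map, h0] at ha
          simp only [Option.mem_def, Option.some.injEq] at ha
          subst ha
          cases ε <;> simp
      · exact hchain
    have hmem' : ∀ p ∈ (wrd ι (if ε then x else y) s, ε) :: ops,
        p.1 ∈ polyNoConst ι (if p.2 then x else y) := by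
      intro p hp
      rcases List.mem_cons.mp hp with h | h
      · subst h; exact mem_poly ε s hs
      · exact hmem p h
    have h := hP ((wrd ι (if ε then x else y) s, ε) :: ops) hch hmem' (Or.inr rfl)
    simp only [List.map_cons, List.prod_cons] at h
    rw [← mul_assoc] at h
    rw [h, mul_assoc]
  -- THE KEY LEMMA
  have key : ∀ (t : List B) (ε : Bool) (s : List B) (g : A) (c : D), s ≠ [] →
      PP ι x y φ ε g c →
      φ (g * (wrd ι (if ε then x else y) s * wrd ι (x + y) t)) =
        ∑ r ∈ Finset.range (t.length + 1),
          c * φ (wrd ι (if ε then x else y) (s ++ t.take r)) *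
            Hfun mt mf (!ε) (t.drop r) := by
    intro t
    induction t with
    | nil =>
      intro ε s g c hs hP
      simp only [List.length_nil, zero_add, Finset.sum_range_one, List.take_nil,
        List.drop_nil, List.append_nil, Hfun_nil, mul_one]
      rw [wrd_nil, mul_one]
      exact P_eval ε g c hP s hs
    | cons b t ih =>
      intro ε s g c hs hP
      have hxy : (x + y) = (if ε then x else y) + (if (!ε) then x else y) := by
        cases ε <;> simp [add_comm]
      have expand : wrd ι (x + y) (b :: t) =
          (if ε then x else y) * ι b * wrd ι (x + y) t +
          (if (!ε) then x else y) * ι b * wrd ι (x + y) t := by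
        rw [wrd_cons, hxy, add_mul, add_mul]
      rw [expand, mul_add, mul_add, map_add]
      -- term 1
      have hw1 : wrd ι (if ε then x else y) s * ((if ε then x else y) * ι b * wrd ι (x + y) t)
          = wrd ι (if ε then x else y) (s ++ [b]) * wrd ι (x + y) t := by
        rw [wrd_append, wrd_cons, wrd_nil, mul_one]
        simp only [mul_assoc]
      have h1 := ih ε (s ++ [b]) g c (by simp) hP
      -- term 2
      have hw2 : g * (wrd ι (if ε then x else y) s *
            ((if (!ε) then x else y) * ι b * wrd ι (x + y) t))
          = (g * wrd ι (if ε then x else y) s) *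
            (wrd ι (if (!ε) then x else y) [b] * wrd ι (x + y) t) := by
        rw [wrd_cons, wrd_nil, mul_one]
        simp only [mul_assoc]
      have h2 := ih (!ε) [b] (g * wrd ι (if ε then x else y) s)
        (c * φ (wrd ι (if ε then x else y) s)) (by simp)
        (P_extend ε g c hP s hs)
      rw [hw1, h1, hw2, h2]
      -- now identify with the RHS
      conv_rhs => rw [show (b :: t).length = t.length + 1 from rfl, Finset.sum_range_succ']
      congr 1
      · refine Finset.sum_congr rfl fun r _ => ?_
        simp only [List.take_succ_cons, List.drop_succ_cons, List.append_assoc,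
          List.singleton_append]
      · -- term 2 equals the `r = 0` term
        rw [List.take_zero, List.append_nil, List.drop_zero,
          Hfun_ne_nil mt mf (!ε) (b :: t) (by simp),
          show (b :: t).length = t.length + 1 from rfl, Finset.mul_sum]
        refine Finset.sum_congr rfl fun k hk => ?_
        rw [List.take_succ_cons, List.drop_succ_cons, m_eq]
        simp only [List.singleton_append, mul_assoc]
  -- Claim A: moments of the sum are given by `Hfun`
  have claimA : ∀ l : List B, l ≠ [] →
      φ (wrd ι (x + y) l) = Hfun mt mf true l + Hfun mt mf false l := by
    intro l hl
    cases l with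
    | nil => exact absurd rfl hl
    | cons b t =>
      have e1 : (if true = true then x else y) = x := by simp
      have e2 : (if false = true then x else y) = y := by simp
      have expand : wrd ι (x + y) (b :: t) =
          1 * (wrd ι x [b] * wrd ι (x + y) t) +
          1 * (wrd ι y [b] * wrd ι (x + y) t) := by
        simp only [wrd, List.map_cons, List.map_nil, List.prod_cons, List.prod_nil,
          mul_one, one_mul, add_mul, mul_assoc]
      have k1 := key t true [b] 1 1 (by simp) (P_one true)
      have k2 := key t false [b] 1 1 (by simp) (P_one false)
      rw [e1] at k1
      rw [e2] at k2
      rw [expand, map_add, k1, k2]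
      rw [Hfun_ne_nil mt mf true (b :: t) (by simp),
        Hfun_ne_nil mt mf false (b :: t) (by simp)]
      rw [show (b :: t).length = t.length + 1 from rfl]
      congr 1
      · refine Finset.sum_congr rfl fun r _ => ?_
        rw [List.take_succ_cons, List.drop_succ_cons, one_mul, m_eq true, e1]
        simp only [List.singleton_append]
      · refine Finset.sum_congr rfl fun r _ => ?_
        rw [List.take_succ_cons, List.drop_succ_cons, one_mul, m_eq false, e2]
        simp only [List.singleton_append]
  -- the `Kval` computation: full sum over assignments reproduces the moment of the sum
  have Kval : ∀ (ε : Bool) (d : List B),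
      (∑ r ∈ Finset.range (d.length + 1),
        (if ε then mt else mf) (d.take r) * Hfun mt mf (!ε) (d.drop r))
        = φ (wrd ι (x + y) d) := by
    intro ε d
    cases d with
    | nil =>
      simp only [List.length_nil, zero_add, Finset.sum_range_one, List.take_nil,
        List.drop_nil, Hfun_nil, mul_one, m_nil]
      rw [wrd_nil]
      exact hunital.symm
    | cons b t =>
      rw [show (b :: t).length = t.length + 1 from rfl, Finset.sum_range_succ']
      simp only [List.take_zero, List.drop_zero, m_nil, one_mul]
      have : (∑ r ∈ Finset.range (t.length + 1),
          (if ε then mt else mf) ((b :: t).take (r + 1)) *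
            Hfun mt mf (!ε) ((b :: t).drop (r + 1))) = Hfun mt mf ε (b :: t) := by
        rw [Hfun_ne_nil mt mf ε (b :: t) (by simp)]
        rfl
      rw [this, claimA (b :: t) (by simp)]
      cases ε
      · simp [add_comm]
      · simp
  -- the recursion for the sum variable with coefficients `cx + cy`
  have recS : ∀ l : List B, l ≠ [] → φ (wrd ι (x + y) l) =
      ∑ k ∈ Finset.range l.length,
        (cx (l.take (k + 1)) + cy (l.take (k + 1))) * φ (wrd ι (x + y) (l.drop (k + 1))) := by
    intro l hl
    have Hval : ∀ ε : Bool, Hfun mt mf ε l =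
        ∑ j ∈ Finset.range l.length,
          (if ε then cx else cy) (l.take (j + 1)) * φ (wrd ι (x + y) (l.drop (j + 1))) := by
      intro ε
      have hrec : ∀ u : List B, u ≠ [] → (if ε then mt else mf) u =
          ∑ j ∈ Finset.range u.length,
            (if ε then cx else cy) (u.take (j + 1)) * (if ε then mt else mf) (u.drop (j + 1)) := by
        intro u hu
        cases ε
        · simpa using hcy u hu
        · simpa using hcx u hu
      rw [Hfun_ne_nil mt mf ε l hl]
      have step1 : ∀ k ∈ Finset.range l.length,
          (if ε then mt else mf) (l.take (k + 1)) * Hfun mt mf (!ε) (l.drop (k + 1))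
          = ∑ j ∈ Finset.range (k + 1),
              (if ε then cx else cy) (l.take (j + 1)) *
                ((if ε then mt else mf) ((l.drop (j + 1)).take (k - j)) *
                  Hfun mt mf (!ε) ((l.drop (j + 1)).drop (k - j))) := by
        intro k hk
        rw [Finset.mem_range] at hk
        have htk : (l.take (k + 1)) ≠ [] := by simp [List.take_eq_nil_iff, hl]
        have hlen : (l.take (k + 1)).length = k + 1 := by
          rw [List.length_take]; omega
        rw [hrec (l.take (k + 1)) htk, hlen, Finset.sum_mul]
        refine Finset.sum_congr rfl fun j hj => ?_
        rw [Finset.mem_range] at hj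
        have h1 : (l.take (k + 1)).take (j + 1) = l.take (j + 1) := by
          rw [List.take_take]
          congr 1
          omega
        have h2 : (l.take (k + 1)).drop (j + 1) = (l.drop (j + 1)).take (k - j) := by
          rw [List.drop_take]
          congr 1
          omega
        have h3 : (l.drop (j + 1)).drop (k - j) = l.drop (k + 1) := by
          rw [List.drop_drop]
          congr 1
          omega
        rw [h1, h2, h3, mul_assoc]
      rw [Finset.sum_congr rfl step1]
      -- swap the triangular double sum
      have swap :
          (∑ k ∈ Finset.range l.length, ∑ j ∈ Finset.range (k + 1),
            (if ε then cx else cy) (l.take (j + 1)) *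
              ((if ε then mt else mf) ((l.drop (j + 1)).take (k - j)) *
                Hfun mt mf (!ε) ((l.drop (j + 1)).drop (k - j))))
          = ∑ j ∈ Finset.range l.length, ∑ k ∈ Finset.Ico j l.length,
            (if ε then cx else cy) (l.take (j + 1)) *
              ((if ε then mt else mf) ((l.drop (j + 1)).take (k - j)) *
                Hfun mt mf (!ε) ((l.drop (j + 1)).drop (k - j))) := by
        simp only [Finset.range_eq_Ico]
        exact (Finset.sum_Ico_Ico_comm 0 l.length _).symm
      rw [swap]
      refine Finset.sum_congr rfl fun j hj => ?_
      rw [Finset.mem_range] at hj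
      rw [Finset.sum_Ico_eq_sum_range]
      simp only [Nat.add_sub_cancel_left]
      rw [← Finset.mul_sum]
      congr 1
      have hlen : (l.drop (j + 1)).length + 1 = l.length - j := by
        rw [List.length_drop]; omega
      rw [← hlen]
      exact Kval ε (l.drop (j + 1))
    rw [claimA l hl, Hval true, Hval false, ← Finset.sum_add_distrib]
    refine Finset.sum_congr rfl fun k _ => ?_
    rw [add_mul]
    simp
  -- Uniqueness of the cumulant recursion
  have final : ∀ n : ℕ, ∀ l : List B, l.length = n → l ≠ [] → cs l = cx l + cy l := by
    intro n
    induction n using Nat.strong_induction_on with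
    | _ n ih =>
      intro l hln hl
      obtain ⟨nn, hnn⟩ : ∃ nn, l.length = nn + 1 := by
        cases l with
        | nil => exact absurd rfl hl
        | cons b t => exact ⟨t.length, rfl⟩
      have h1 := hcs l hl
      have h2 := recS l hl
      rw [hnn, Finset.sum_range_succ] at h1 h2
      have hdrop : l.drop (nn + 1) = [] := by rw [← hnn]; exact List.drop_length
      have htake : l.take (nn + 1) = l := by rw [← hnn]; exact List.take_length
      rw [hdrop, htake, wrd_nil, hunital, mul_one] at h1 h2
      have hsum : (∑ k ∈ Finset.range nn, cs (l.take (k + 1)) * φ (wrd ι (x + y) (l.drop (k + 1))))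
          = ∑ k ∈ Finset.range nn,
              (cx (l.take (k + 1)) + cy (l.take (k + 1))) * φ (wrd ι (x + y) (l.drop (k + 1))) := by
        refine Finset.sum_congr rfl fun k hk => ?_
        rw [Finset.mem_range] at hk
        have hlt : (l.take (k + 1)).length = k + 1 := by
          rw [List.length_take]; omega
        have hne : l.take (k + 1) ≠ [] := by simp [List.take_eq_nil_iff, hl]
        rw [ih (k + 1) (by omega) (l.take (k + 1)) hlt hne]
      rw [hsum] at h1
      have := h1.symm.trans h2
      exact add_left_cancel this
  intro l hl
  exact final l.length l rfl hl
end

section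
/- In the scalar case, let H be a Hilbert space with distinguished unit vector Ω, ξ ∈ H orthogonal to Ω, T a selfadjoint operator on H⊖ℂΩ, λ ∈ ℝ, and let a_ξ, a*_ξ be the boolean annihilation/creation operators (a*_ξ Ω = ξ, a*_ξ|_{H⊖ℂΩ} = 0, a_ξ = (a*_ξ)*) and Λ = λ·(projection onto ℂΩ). Then the boolean cumulants of V = a_ξ + a*_ξ + T + Λ with respect to the vector state ⟨·Ω, Ω⟩ are B₁ = λ and Bₙ = ⟨T^{n-2} ξ, ξ⟩ for n ≥ 2. -/
open scoped ComplexInnerProductSpace in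
/-- **scalar boolean Fock realization of boolean cumulants.**
`H` a Hilbert space, `Ω` a unit vector, `ξ ⊥ Ω`; `a'` is the boolean creation
operator (`a' Ω = ξ`, `a' = 0` on `Ω^⊥`) and `a = (a')^*`; `T` is selfadjoint,
kills `Ω` and preserves `Ω^⊥`; `Λ = λ · (projection onto ℂΩ)`.  If `(Bc n)` are
the boolean cumulants of `V = a + a' + T + Λ` with respect to the state
`⟨·Ω, Ω⟩`, i.e. `⟨VⁿΩ, Ω⟩ = ∑_{k=1}^n ⟨V^{n-k}Ω, Ω⟩ · Bc k` for `n ≥ 1`, then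
`Bc 1 = λ` and `Bc n = ⟨T^{n-2} ξ, ξ⟩` for `n ≥ 2`. -/
theorem boolean_cumulants_fock_scalar
    {H : Type*} [NormedAddCommGroup H] [InnerProductSpace ℂ H] [CompleteSpace H]
    (Ω ξ : H) (hΩ : ‖Ω‖ = 1) (hξΩ : ⟪ξ, Ω⟫ = 0)
    (a a' T Λ : H →L[ℂ] H) (lam : ℝ)
    (ha' : a' Ω = ξ) (ha'0 : ∀ η : H, ⟪η, Ω⟫ = 0 → a' η = 0)
    (ha : a = ContinuousLinearMap.adjoint a')
    (hTsa : T = ContinuousLinearMap.adjoint T)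
    (hTΩ : T Ω = 0) (hTperp : ∀ η : H, ⟪η, Ω⟫ = 0 → ⟪T η, Ω⟫ = 0)
    (hΛΩ : Λ Ω = (lam : ℂ) • Ω) (hΛ0 : ∀ η : H, ⟪η, Ω⟫ = 0 → Λ η = 0)
    (V : H →L[ℂ] H) (hV : V = a + a' + T + Λ)
    (Bc : ℕ → ℂ)
    (hBc : ∀ n : ℕ, 1 ≤ n →
      ⟪(V ^ n) Ω, Ω⟫ = ∑ k ∈ Finset.Icc 1 n, ⟪(V ^ (n - k)) Ω, Ω⟫ * Bc k) :
    Bc 1 = (lam : ℂ) ∧ ∀ n : ℕ, 2 ≤ n → Bc n = ⟪(T ^ (n - 2)) ξ, ξ⟫ := by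
  have hΩΩ : ⟪Ω, Ω⟫ = (1 : ℂ) := by
    rw [inner_self_eq_norm_sq_to_K, hΩ]; norm_num
  have hΩξ : ⟪Ω, ξ⟫ = 0 := by rw [← inner_conj_symm, hξΩ, map_zero]
  -- the creation operator in general
  have ha'gen : ∀ η : H, a' η = ⟪Ω, η⟫ • ξ := by
    intro η
    have hperp : ⟪η - ⟪Ω, η⟫ • Ω, Ω⟫ = 0 := by
      rw [inner_sub_left, inner_smul_left, hΩΩ, mul_one, inner_conj_symm, sub_self]
    calc a' η = a' (⟪Ω, η⟫ • Ω + (η - ⟪Ω, η⟫ • Ω)) := by rw [add_sub_cancel]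
      _ = ⟪Ω, η⟫ • a' Ω + a' (η - ⟪Ω, η⟫ • Ω) := by rw [map_add, map_smul]
      _ = ⟪Ω, η⟫ • ξ := by rw [ha', ha'0 _ hperp, add_zero]
  -- the annihilation operator in general
  have hagen : ∀ η : H, a η = ⟪ξ, η⟫ • Ω := by
    intro η
    apply ext_inner_left ℂ
    intro v
    rw [ha, ContinuousLinearMap.adjoint_inner_right, ha'gen, inner_smul_left,
      inner_smul_right, inner_conj_symm]
    ring
  -- action of V on Ω and on vectors orthogonal to Ω
  have hVΩ : V Ω = (lam : ℂ) • Ω + ξ := by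
    rw [hV]
    simp only [ContinuousLinearMap.add_apply, hagen, ha', hTΩ, hΛΩ, hξΩ, zero_smul]
    abel
  have hVperp : ∀ η : H, ⟪η, Ω⟫ = 0 → V η = ⟪ξ, η⟫ • Ω + T η := by
    intro η hη
    have hΩη : ⟪Ω, η⟫ = 0 := by rw [← inner_conj_symm, hη, map_zero]
    rw [hV]
    simp only [ContinuousLinearMap.add_apply, hagen, ha'gen, hΩη, zero_smul,
      hΛ0 η hη, add_zero, zero_add]
  -- T^j ξ is orthogonal to Ω
  have hTj : ∀ j : ℕ, ⟪(T ^ j) ξ, Ω⟫ = 0 := by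
    intro j
    induction j with
    | zero => simpa using hξΩ
    | succ j ih =>
      rw [pow_succ', ContinuousLinearMap.mul_apply]
      exact hTperp _ ih
  have hΩTj : ∀ j : ℕ, ⟪Ω, (T ^ j) ξ⟫ = 0 := by
    intro j; rw [← inner_conj_symm, hTj, map_zero]
  -- the scalar coefficients and the orthogonal parts
  set c : ℕ → ℂ := fun n => ⟪Ω, (V ^ n) Ω⟫ with hc
  set W : ℕ → H := fun n => ∑ j ∈ Finset.range (n + 1), c (n - j) • (T ^ j) ξ with hWdef
  have hc0 : c 0 = 1 := by simp [hc, hΩΩ, hΩ]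
  have hc1 : c 1 = (lam : ℂ) := by
    show ⟪Ω, (V ^ 1) Ω⟫ = _
    rw [pow_one, hVΩ, inner_add_right, hΩξ, add_zero, inner_smul_right, hΩΩ, mul_one]
  have hW0 : W 0 = ξ := by simp [hWdef, hc0]
  have hΩW : ∀ n : ℕ, ⟪Ω, W n⟫ = 0 := by
    intro n
    rw [hWdef]
    simp only [inner_sum, inner_smul_right, hΩTj, mul_zero, Finset.sum_const_zero]
  -- action of V on W n
  have hVW : ∀ n : ℕ, V (W n) =
      (∑ j ∈ Finset.range (n + 1), c (n - j) * ⟪ξ, (T ^ j) ξ⟫) • Ω +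
      ∑ j ∈ Finset.range (n + 1), c (n - j) • (T ^ (j + 1)) ξ := by
    intro n
    rw [hWdef, map_sum]
    rw [Finset.sum_smul, ← Finset.sum_add_distrib]
    refine Finset.sum_congr rfl fun j _ => ?_
    rw [map_smul, hVperp _ (hTj j), smul_add, smul_smul, pow_succ',
      ContinuousLinearMap.mul_apply]
  -- key structural decomposition
  have key : ∀ n : ℕ, (V ^ (n + 1)) Ω = c (n + 1) • Ω + W n := by
    intro n
    induction n with
    | zero =>
      rw [pow_one, hVΩ, hc1, hW0]
    | succ n ih =>
      have e1 : (V ^ (n + 2)) Ω = V ((V ^ (n + 1)) Ω) := by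
        rw [pow_succ', ContinuousLinearMap.mul_apply]
      have E : (V ^ (n + 2)) Ω =
          ((lam : ℂ) * c (n + 1) + ∑ j ∈ Finset.range (n + 1), c (n - j) * ⟪ξ, (T ^ j) ξ⟫) • Ω +
          (c (n + 1) • ξ + ∑ j ∈ Finset.range (n + 1), c (n - j) • (T ^ (j + 1)) ξ) := by
        rw [e1, ih, map_add, map_smul, hVΩ, hVW n]
        module
      have hperp2 : ⟪Ω, c (n + 1) • ξ + ∑ j ∈ Finset.range (n + 1), c (n - j) • (T ^ (j + 1)) ξ⟫
          = 0 := by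
        simp only [inner_add_right, inner_smul_right, hΩξ, mul_zero, inner_sum, hΩTj,
          Finset.sum_const_zero, add_zero]
      have hC : c (n + 2) =
          (lam : ℂ) * c (n + 1) + ∑ j ∈ Finset.range (n + 1), c (n - j) * ⟪ξ, (T ^ j) ξ⟫ := by
        show ⟪Ω, (V ^ (n + 2)) Ω⟫ = _
        rw [E, inner_add_right, inner_smul_right, hΩΩ, hperp2, add_zero, mul_one]
      have hWs : W (n + 1) =
          c (n + 1) • ξ + ∑ j ∈ Finset.range (n + 1), c (n - j) • (T ^ (j + 1)) ξ := by
        have h := Finset.sum_range_succ' (fun j => c (n + 1 - j) • (T ^ j) ξ) (n + 1)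
        simp only [Nat.succ_sub_succ_eq_sub, Nat.sub_zero, pow_zero,
          ContinuousLinearMap.one_apply] at h
        simp only [hWdef]
        exact h.trans (add_comm _ _)
      rw [E, hC, hWs]
  -- recursion for the coefficients
  have crec : ∀ n : ℕ, c (n + 2) =
      (lam : ℂ) * c (n + 1) + ∑ j ∈ Finset.range (n + 1), c (n - j) * ⟪ξ, (T ^ j) ξ⟫ := by
    intro n
    have e1 : (V ^ (n + 2)) Ω = V ((V ^ (n + 1)) Ω) := by
      rw [pow_succ', ContinuousLinearMap.mul_apply]
    show ⟪Ω, (V ^ (n + 2)) Ω⟫ = _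
    rw [e1, key n, map_add, map_smul, hVΩ, hVW n]
    simp only [inner_add_right, inner_smul_right, hΩΩ, hΩξ, mul_one, mul_zero, add_zero,
      inner_sum, hΩTj, Finset.sum_const_zero]
    ring
  -- moments as conjugates of coefficients
  have hmc : ∀ n : ℕ, ⟪(V ^ n) Ω, Ω⟫ = starRingEnd ℂ (c n) := by
    intro n; rw [hc, inner_conj_symm]
  -- the target cumulant values
  set b : ℕ → ℂ := fun k => if k = 1 then (lam : ℂ) else ⟪(T ^ (k - 2)) ξ, ξ⟫ with hb
  -- the moment recursion with the target values
  have mom : ∀ n : ℕ, 1 ≤ n →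
      ⟪(V ^ n) Ω, Ω⟫ = ∑ k ∈ Finset.Icc 1 n, ⟪(V ^ (n - k)) Ω, Ω⟫ * b k := by
    intro n hn
    match n, hn with
    | 1, _ =>
      rw [hmc, hc1, Complex.conj_ofReal]
      simp [hmc, hc0, hb, hΩ]
    | (m + 2), _ =>
      have LHS : ⟪(V ^ (m + 2)) Ω, Ω⟫ =
          ⟪(V ^ (m + 1)) Ω, Ω⟫ * (lam : ℂ) +
          ∑ j ∈ Finset.range (m + 1), ⟪(V ^ (m - j)) Ω, Ω⟫ * ⟪(T ^ j) ξ, ξ⟫ := by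
        rw [hmc, crec m, map_add, map_mul, map_sum, Complex.conj_ofReal, hmc]
        rw [mul_comm]
        congr 1
        refine Finset.sum_congr rfl fun j _ => ?_
        rw [map_mul, hmc]
        congr 1
        exact inner_conj_symm _ _
      have RHS : ∑ k ∈ Finset.Icc 1 (m + 2), ⟪(V ^ (m + 2 - k)) Ω, Ω⟫ * b k =
          ⟪(V ^ (m + 1)) Ω, Ω⟫ * (lam : ℂ) +
          ∑ j ∈ Finset.range (m + 1), ⟪(V ^ (m - j)) Ω, Ω⟫ * ⟪(T ^ j) ξ, ξ⟫ := by
        rw [← Finset.Ico_add_one_right_eq_Icc, Finset.sum_Ico_eq_sum_range]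
        have hms : m + 2 + 1 - 1 = m + 2 := by omega
        rw [hms, Finset.sum_range_succ', add_comm]
        congr 1
        · refine Finset.sum_congr rfl fun j hj => ?_
          have e1 : 1 + (j + 1) = j + 2 := by omega
          rw [e1]
          have e2 : m + 2 - (j + 2) = m - j := by omega
          have e3 : b (j + 2) = ⟪(T ^ j) ξ, ξ⟫ := by
            rw [hb]; simp
          rw [e2, e3]
      rw [LHS, RHS]
  -- the cumulants are determined by the recursion
  have main : ∀ n : ℕ, 1 ≤ n → Bc n = b n := by
    intro n
    induction n using Nat.strong_induction_on with
    | _ n IH =>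
      intro hn
      obtain ⟨m, rfl⟩ : ∃ m, n = m + 1 := ⟨n - 1, by omega⟩
      have h1 := hBc (m + 1) (by omega)
      have h2 := mom (m + 1) (by omega)
      rw [Finset.sum_Icc_succ_top (by omega)] at h1 h2
      have h3 : ∑ k ∈ Finset.Icc 1 m, ⟪(V ^ (m + 1 - k)) Ω, Ω⟫ * Bc k =
          ∑ k ∈ Finset.Icc 1 m, ⟪(V ^ (m + 1 - k)) Ω, Ω⟫ * b k := by
        refine Finset.sum_congr rfl fun k hk => ?_
        rw [Finset.mem_Icc] at hk
        rw [IH k (by omega) hk.1]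
      rw [h3] at h1
      have h4 : ⟪(V ^ (m + 1 - (m + 1))) Ω, Ω⟫ = 1 := by
        simp [hmc, hc0, hΩΩ, hΩ]
      rw [h4, one_mul] at h1 h2
      exact add_left_cancel (h1.symm.trans h2)
  constructor
  · rw [main 1 (by omega), hb]; simp
  · intro n hn
    rw [main n (by omega), hb]
    simp only [if_neg (by omega : n ≠ 1)]
end
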